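/- Lagrange Inversion Formula: if f(y) is a formal power series with f(0) ≠ 0, then the compositional inverse of x = y/f(y) is given by y = Σ_{k≥1} (x^k/k!) · [(d/dy)^{k-1} (f(y)^k)]|_{y=0}. -/

import Mathlib

open PowerSeries

/-- Formal composition `f ∘ g` of power series, valid when `g` has zero
constant term. -/
noncomputable def psComp {K : Type*} [CommRing K] (f g : PowerSeries K) : PowerSeries K :=
  PowerSeries.mk fun n =>
    PowerSeries.coeff n (∑ k ∈ Finset.range (n + 1), PowerSeries.coeff k f • g ^ k)

namespace LagAux

variable {K : Type*} [Field K]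

lemma coeff_derivativeFun' (f : PowerSeries K) (n : ℕ) :
    coeff n (derivativeFun f) = coeff (n + 1) f * (n + 1) :=
  coeff_derivative f n

lemma coeff_pow_y {y : PowerSeries K} (hy0 : constantCoeff y = 0)
    {n k : ℕ} (h : n < k) : coeff n (y ^ k) = 0 :=
  X_pow_dvd_iff.mp (pow_dvd_pow_of_dvd (X_dvd_iff.mpr hy0) k) n h

lemma coeff_psComp {y : PowerSeries K} (hy0 : constantCoeff y = 0)
    (g : PowerSeries K) {n M : ℕ} (h : n < M) :
    coeff n (psComp g y) = ∑ k ∈ Finset.range M, coeff k g * coeff n (y ^ k) := by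
  rw [psComp, coeff_mk, map_sum]
  rw [Finset.sum_congr rfl (fun k _ => by rw [coeff_smul, smul_eq_mul])]
  apply Finset.sum_subset (Finset.range_subset_range.mpr h)
  intro k _ hk
  rw [Finset.mem_range, not_lt] at hk
  rw [coeff_pow_y hy0 (lt_of_lt_of_le (Nat.lt_of_lt_of_le (Nat.lt_succ_self n) hk) le_rfl),
    mul_zero]

lemma coeff_aeval {y : PowerSeries K} (hy0 : constantCoeff y = 0)
    (p : Polynomial K) (n : ℕ) :
    coeff n (Polynomial.aeval y p) =
      ∑ k ∈ Finset.range (n + 1), p.coeff k * coeff n (y ^ k) := by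
  rw [Polynomial.aeval_eq_sum_range, map_sum]
  rw [Finset.sum_congr rfl (fun k _ => by rw [coeff_smul, smul_eq_mul])]
  have h1 : ∑ k ∈ Finset.range (p.natDegree + 1), p.coeff k * coeff n (y ^ k)
      = ∑ k ∈ Finset.range (max (p.natDegree + 1) (n + 1)), p.coeff k * coeff n (y ^ k) := by
    apply Finset.sum_subset (Finset.range_subset_range.mpr (le_max_left _ _))
    intro k _ hk
    rw [Finset.mem_range, not_lt] at hk
    rw [Polynomial.coeff_eq_zero_of_natDegree_lt (by omega), zero_mul]
  have h2 : ∑ k ∈ Finset.range (n + 1), p.coeff k * coeff n (y ^ k)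
      = ∑ k ∈ Finset.range (max (p.natDegree + 1) (n + 1)), p.coeff k * coeff n (y ^ k) := by
    apply Finset.sum_subset (Finset.range_subset_range.mpr (le_max_right _ _))
    intro k _ hk
    rw [Finset.mem_range, not_lt] at hk
    rw [coeff_pow_y hy0 (by omega), mul_zero]
  rw [h1, h2]

lemma coeff_psComp_aeval {y : PowerSeries K} (hy0 : constantCoeff y = 0)
    (g : PowerSeries K) {n M : ℕ} (h : n < M) :
    coeff n (psComp g y) = coeff n (Polynomial.aeval y (trunc M g)) := by
  rw [coeff_psComp hy0 g h, coeff_aeval hy0]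
  symm
  have h1 : ∑ k ∈ Finset.range (n + 1), (trunc M g).coeff k * coeff n (y ^ k)
      = ∑ k ∈ Finset.range M, (trunc M g).coeff k * coeff n (y ^ k) := by
    apply Finset.sum_subset (Finset.range_subset_range.mpr h)
    intro k _ hk
    rw [Finset.mem_range, not_lt] at hk
    rw [coeff_pow_y hy0 (by omega), mul_zero]
  rw [h1]
  apply Finset.sum_congr rfl
  intro k hk
  rw [Finset.mem_range] at hk
  rw [coeff_trunc, if_pos hk]

lemma psComp_mul {y : PowerSeries K} (hy0 : constantCoeff y = 0)
    (g h : PowerSeries K) : psComp (g * h) y = psComp g y * psComp h y := by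
  ext n
  rw [PowerSeries.coeff_mul]
  have e1 : ∑ p ∈ Finset.HasAntidiagonal.antidiagonal n, coeff p.1 (psComp g y) * coeff p.2 (psComp h y)
      = ∑ p ∈ Finset.HasAntidiagonal.antidiagonal n,
          coeff p.1 (Polynomial.aeval y (trunc (n+1) g)) *
          coeff p.2 (Polynomial.aeval y (trunc (n+1) h)) := by
    apply Finset.sum_congr rfl
    intro p hp
    rw [Finset.HasAntidiagonal.mem_antidiagonal] at hp
    rw [coeff_psComp_aeval hy0 g (M := n+1) (by omega),
      coeff_psComp_aeval hy0 h (M := n+1) (by omega)]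
  rw [e1, ← PowerSeries.coeff_mul, ← map_mul]
  rw [coeff_aeval hy0, coeff_psComp hy0 _ (Nat.lt_succ_self n)]
  apply Finset.sum_congr rfl
  intro k hk
  rw [Finset.mem_range] at hk
  congr 1
  rw [Polynomial.coeff_mul, PowerSeries.coeff_mul]
  apply Finset.sum_congr rfl
  intro p hp
  rw [Finset.HasAntidiagonal.mem_antidiagonal] at hp
  rw [coeff_trunc, if_pos (by omega), coeff_trunc, if_pos (by omega)]

lemma psComp_one {y : PowerSeries K} (hy0 : constantCoeff y = 0) :
    psComp 1 y = 1 := by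
  ext n
  rw [coeff_psComp hy0 1 (Nat.lt_succ_self n)]
  rw [Finset.sum_eq_single 0]
  · simp
  · intro k _ hk
    rw [coeff_one, if_neg hk, zero_mul]
  · intro h; exact absurd (Finset.mem_range.mpr (Nat.succ_pos n)) h

lemma psComp_X {y : PowerSeries K} (hy0 : constantCoeff y = 0) :
    psComp X y = y := by
  ext n
  rw [coeff_psComp hy0 X (Nat.lt_succ_self n)]
  rcases Nat.eq_zero_or_pos n with h | h
  · subst h
    simp [coeff_X, coeff_zero_eq_constantCoeff_apply, hy0]
  · rw [Finset.sum_eq_single 1]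
    · simp
    · intro k _ hk
      rw [coeff_X, if_neg hk, zero_mul]
    · intro hc; exact absurd (Finset.mem_range.mpr (by omega)) hc

lemma psComp_pow {y : PowerSeries K} (hy0 : constantCoeff y = 0)
    (g : PowerSeries K) (n : ℕ) : psComp (g ^ n) y = (psComp g y) ^ n := by
  induction n with
  | zero => simpa using psComp_one hy0
  | succ m ih => rw [pow_succ, pow_succ, psComp_mul hy0, ih]

lemma constantCoeff_psComp {y : PowerSeries K} (hy0 : constantCoeff y = 0)
    (g : PowerSeries K) : constantCoeff (psComp g y) = constantCoeff g := by
  rw [← coeff_zero_eq_constantCoeff_apply, ← coeff_zero_eq_constantCoeff_apply,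
    coeff_psComp hy0 g (Nat.lt_succ_self 0)]
  simp

lemma derivativeFun_X' : derivativeFun (X : PowerSeries K) = 1 := by
  ext n
  rw [coeff_derivativeFun']
  rcases Nat.eq_zero_or_pos n with h | h
  · subst h; simp
  · rw [coeff_X, if_neg (by omega), coeff_one, if_neg (by omega), zero_mul]

lemma derivativeFun_pow' (u : PowerSeries K) (m : ℕ) :
    derivativeFun (u ^ (m + 1)) =
      ((m + 1 : ℕ) : PowerSeries K) * u ^ m * derivativeFun u := by
  induction m with
  | zero => simp
  | succ i ih =>
    rw [pow_succ, derivativeFun_mul, ih]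
    push_cast
    rw [smul_eq_mul, smul_eq_mul]
    ring

variable [CharZero K]

lemma coeffB_succ {F u : PowerSeries K} (huF : F * u = 1) (i : ℕ) :
    coeff (i + 1) (derivativeFun (X * F) * u ^ (i + 2)) = 0 := by
  have hD : derivativeFun (X * F) = X * derivativeFun F + F := by
    rw [derivativeFun_mul, derivativeFun_X', smul_eq_mul, smul_eq_mul, mul_one]
  have h2 : F * derivativeFun u + u * derivativeFun F = 0 := by
    have h := congrArg derivativeFun huF
    rwa [derivativeFun_mul, derivativeFun_one, smul_eq_mul, smul_eq_mul] at h
  have hDu : derivativeFun (u ^ (i + 1)) =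
      -(((i + 1 : ℕ) : PowerSeries K) * (u ^ (i + 2) * derivativeFun F)) := by
    have hpow := derivativeFun_pow' u i
    linear_combination hpow + ((i + 1 : ℕ) : PowerSeries K) * u ^ (i + 1) * h2 -
      ((i + 1 : ℕ) : PowerSeries K) * u ^ i * derivativeFun u * huF
  have hsplit : derivativeFun (X * F) * u ^ (i + 2) =
      X * (derivativeFun F * u ^ (i + 2)) + u ^ (i + 1) := by
    rw [hD]
    linear_combination u ^ (i + 1) * huF
  rw [hsplit, map_add, coeff_succ_X_mul]
  have h3 := congrArg (coeff i) hDu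
  rw [coeff_derivativeFun'] at h3
  rw [map_neg] at h3
  have hcast : ((i + 1 : ℕ) : PowerSeries K) = C ((i + 1 : ℕ) : K) := by
    rw [map_natCast]
  rw [hcast, coeff_C_mul] at h3
  have hne : ((i + 1 : ℕ) : K) ≠ 0 := Nat.cast_ne_zero.mpr (Nat.succ_ne_zero i)
  have key : ((i + 1 : ℕ) : K) *
      (coeff i (derivativeFun F * u ^ (i + 2)) + coeff (i + 1) (u ^ (i + 1))) = 0 := by
    have hcomm : coeff i (u ^ (i + 2) * derivativeFun F)
        = coeff i (derivativeFun F * u ^ (i + 2)) := by rw [mul_comm]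
    rw [hcomm] at h3
    push_cast at h3 ⊢
    linear_combination h3
  have h4 := (mul_eq_zero.mp key).resolve_left hne
  linear_combination h4

lemma coeffB_zero {F u : PowerSeries K} (hF0 : True) (huF : F * u = 1) :
    coeff 0 (derivativeFun (X * F) * u) = 1 := by
  have hD : derivativeFun (X * F) = X * derivativeFun F + F := by
    rw [derivativeFun_mul, derivativeFun_X', smul_eq_mul, smul_eq_mul, mul_one]
  rw [coeff_zero_eq_constantCoeff_apply, hD, add_mul, map_add]
  have h1 : constantCoeff (X * derivativeFun F * u) = 0 := by
    rw [map_mul, map_mul, constantCoeff_X, zero_mul, zero_mul]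
  rw [h1, zero_add, huF, map_one]

lemma coeffB {F u : PowerSeries K} (huF : F * u = 1) (j : ℕ) :
    coeff j (derivativeFun (X * F) * u ^ (j + 1)) = if j = 0 then 1 else 0 := by
  rcases j with _ | i
  · rw [if_pos rfl, pow_one]
    exact coeffB_zero trivial huF
  · rw [if_neg (Nat.succ_ne_zero i)]
    exact coeffB_succ huF i

lemma lemA {y F u g : PowerSeries K} (hy0 : constantCoeff y = 0)
    (hyF : y = X * F) (huF : F * u = 1) (N : ℕ) :
    coeff N (derivativeFun y * psComp g y * u ^ (N + 1)) = coeff N g := by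
  set P : PowerSeries K := ∑ m ∈ Finset.range (N + 1), C (coeff m g) * y ^ m with hPdef
  have hP : ∀ i ≤ N, coeff i P = coeff i (psComp g y) := by
    intro i hi
    rw [hPdef, map_sum, coeff_psComp hy0 g (Nat.lt_succ_of_le hi)]
    exact Finset.sum_congr rfl fun k _ => by rw [coeff_C_mul]
  have hdvd : X ^ (N + 1) ∣ (psComp g y - P) := by
    rw [X_pow_dvd_iff]
    intro m hm
    rw [map_sub, hP m (by omega), sub_self]
  obtain ⟨D, hD⟩ := hdvd
  have hgy : psComp g y = P + X ^ (N + 1) * D := by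
    rw [← hD]; ring
  rw [hgy]
  have hexp : derivativeFun y * (P + X ^ (N + 1) * D) * u ^ (N + 1)
      = derivativeFun y * P * u ^ (N + 1)
        + X ^ (N + 1) * (derivativeFun y * D * u ^ (N + 1)) := by ring
  rw [hexp, map_add]
  have hzero : coeff N (X ^ (N + 1) * (derivativeFun y * D * u ^ (N + 1))) = 0 :=
    X_pow_dvd_iff.mp (dvd_mul_right _ _) N (Nat.lt_succ_self N)
  rw [hzero, add_zero]
  have hsum : derivativeFun y * P * u ^ (N + 1)
      = ∑ m ∈ Finset.range (N + 1),
          C (coeff m g) * (derivativeFun y * y ^ m * u ^ (N + 1)) := by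
    rw [hPdef, Finset.mul_sum, Finset.sum_mul]
    exact Finset.sum_congr rfl fun m _ => by ring
  rw [hsum, map_sum]
  have hterm : ∀ m ∈ Finset.range (N + 1),
      coeff N (C (coeff m g) * (derivativeFun y * y ^ m * u ^ (N + 1)))
        = if m = N then coeff N g else 0 := by
    intro m hm
    rw [Finset.mem_range] at hm
    obtain ⟨j, hj⟩ : ∃ j, N = m + j := ⟨N - m, by omega⟩
    have hFu : F ^ m * u ^ m = 1 := by rw [← mul_pow, huF, one_pow]
    have harr : derivativeFun y * y ^ m * u ^ (N + 1)
        = X ^ m * (derivativeFun (X * F) * u ^ (j + 1)) * (F ^ m * u ^ m) := by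
      rw [hyF, hj, mul_pow]
      ring
    rw [coeff_C_mul, harr, hFu, mul_one, hj, add_comm m j, coeff_X_pow_mul, coeffB huF j]
    rcases Nat.eq_zero_or_pos j with h0 | h0
    · subst h0
      rw [if_pos rfl, if_pos (by omega), mul_one]
      norm_num
    · rw [if_neg (by omega), if_neg (by omega), mul_zero]
  rw [Finset.sum_congr rfl hterm, Finset.sum_ite_eq' (Finset.range (N + 1)) N fun _ => coeff N g,
    if_pos (Finset.mem_range.mpr (Nat.lt_succ_self N))]

lemma iter_deriv (g : PowerSeries K) :
    ∀ m, constantCoeff (derivativeFun^[m] g) = m.factorial * coeff m g := by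
  intro m
  induction m generalizing g with
  | zero => simp [coeff_zero_eq_constantCoeff_apply]
  | succ m ih =>
    rw [Function.iterate_succ_apply, ih, coeff_derivativeFun', Nat.factorial_succ]
    push_cast
    ring

end LagAux

/-- Lagrange Inversion Formula: if `f(0) ≠ 0` and `y(x)` is the compositional
inverse of `x = y / f(y)` (i.e. `y(x)/f(y(x)) = x` with `y(0) = 0`), then
`coeff k y = [(d/dy)^(k-1) (f^k)](0) / k!` for all `k ≥ 1`. -/
theorem lagrange_inversion (K : Type*) [Field K] [CharZero K]
    (f : PowerSeries K) (hf : PowerSeries.constantCoeff f ≠ 0)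
    (y : PowerSeries K) (hy0 : PowerSeries.constantCoeff y = 0)
    (hinv : psComp (PowerSeries.X * f⁻¹) y = PowerSeries.X) :
    ∀ k, 1 ≤ k →
      PowerSeries.coeff k y =
        PowerSeries.constantCoeff (PowerSeries.derivativeFun^[k - 1] (f ^ k)) /
          k.factorial := by
  intro k hk
  obtain ⟨m, rfl⟩ : ∃ m, k = m + 1 := ⟨k - 1, by omega⟩
  set F := psComp f y with hF
  set S := psComp f⁻¹ y with hS
  have hSF : S * F = 1 := by
    rw [hS, hF, ← LagAux.psComp_mul hy0, PowerSeries.inv_mul_cancel f hf, LagAux.psComp_one hy0]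
  have hyS : y * S = X := by
    rw [← hinv, LagAux.psComp_mul hy0, LagAux.psComp_X hy0]
  have hyF : y = X * F := by
    calc y = y * (S * F) := by rw [hSF, mul_one]
    _ = (y * S) * F := by ring
    _ = X * F := by rw [hyS]
  have hFS : F * S = 1 := by rw [mul_comm]; exact hSF
  have hpow : psComp (f ^ (m + 1)) y = F ^ (m + 1) := LagAux.psComp_pow hy0 f (m + 1)
  have hFSpow : F ^ (m + 1) * S ^ (m + 1) = 1 := by rw [← mul_pow, hFS, one_pow]
  have main : coeff m (f ^ (m + 1)) = coeff (m + 1) y * ((m : K) + 1) := by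
    have h1 := LagAux.lemA hy0 hyF hFS (g := f ^ (m + 1)) m
    rw [hpow] at h1
    have h2 : derivativeFun y * F ^ (m + 1) * S ^ (m + 1) = derivativeFun y := by
      rw [mul_assoc, hFSpow, mul_one]
    rw [h2, LagAux.coeff_derivativeFun'] at h1
    rw [← h1]
  have hrhs : constantCoeff (derivativeFun^[m + 1 - 1] (f ^ (m + 1)))
      = (m.factorial : K) * coeff m (f ^ (m + 1)) := by
    simp only [Nat.add_sub_cancel]
    exact LagAux.iter_deriv (f ^ (m + 1)) m
  rw [hrhs, main, Nat.factorial_succ]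
  have h1 : ((m : K) + 1) ≠ 0 := by
    have : (((m + 1 : ℕ)) : K) ≠ 0 := Nat.cast_ne_zero.mpr (Nat.succ_ne_zero m)
    push_cast at this; exact this
  have h2 : (m.factorial : K) ≠ 0 := Nat.cast_ne_zero.mpr m.factorial_ne_zero
  field_simp
  push_cast
  ring
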